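/- Let a_max > 0, l ≤ u, and let p₀ ∈ [l, u] and v₀ ∈ ℝ with v₀ ≠ 0. Suppose the braking endpoint p₁ := p₀ + v₀·|v₀|/(2 a_max) satisfies l ≤ p₁ ≤ u. Define the braking trajectory p(t) = p₀ + v₀ t − sign(v₀)·(a_max/2)·t² on [0, |v₀|/a_max]. Then p is twice differentiable with |p''(t)| = a_max, its velocity p'(t) = v₀ − sign(v₀) a_max t satisfies |p'(t)| ≤ |v₀| and p'(|v₀|/a_max) = 0, p(|v₀|/a_max) = p₁, and l ≤ p(t) ≤ u for every t ∈ [0, |v₀|/a_max]. -/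

import Mathlib

open Set

theorem braking_trajectory_in_corridor
    (amax l u p₀ v₀ : ℝ) (ha : 0 < amax) (hlu : l ≤ u)
    (hp₀ : p₀ ∈ Set.Icc l u) (hv₀ : v₀ ≠ 0)
    (p₁ : ℝ) (hp₁def : p₁ = p₀ + v₀ * |v₀| / (2 * amax))
    (hp₁ : l ≤ p₁ ∧ p₁ ≤ u)
    (p v : ℝ → ℝ)
    (hpdef : ∀ t, p t = p₀ + v₀ * t - Real.sign v₀ * (amax / 2) * t ^ 2)
    (hvdef : ∀ t, v t = v₀ - Real.sign v₀ * amax * t) :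
    (∀ t, HasDerivAt p (v t) t) ∧
    (∀ t, HasDerivAt v (-(Real.sign v₀) * amax) t) ∧
    |(-(Real.sign v₀) * amax)| = amax ∧
    (∀ t ∈ Set.Icc 0 (|v₀| / amax), |v t| ≤ |v₀|) ∧
    v (|v₀| / amax) = 0 ∧
    p (|v₀| / amax) = p₁ ∧
    (∀ t ∈ Set.Icc 0 (|v₀| / amax), l ≤ p t ∧ p t ≤ u) := by
  obtain ⟨hl0, hu0⟩ := hp₀
  obtain ⟨hl1, hu1⟩ := hp₁
  have hs : (Real.sign v₀ = 1 ∧ |v₀| = v₀) ∨ (Real.sign v₀ = -1 ∧ |v₀| = -v₀) := by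
    rcases hv₀.lt_or_gt with h | h
    · exact Or.inr ⟨Real.sign_of_neg h, abs_of_neg h⟩
    · exact Or.inl ⟨Real.sign_of_pos h, abs_of_pos h⟩
  have hA : v₀ * |v₀| / (2 * amax) * (2 * amax) = v₀ * |v₀| :=
    div_mul_cancel₀ _ (by positivity)
  rw [hp₁def] at hl1 hu1
  refine ⟨?_, ?_, ?_, ?_, ?_, ?_, ?_⟩
  · intro t
    have h1 : HasDerivAt (fun t : ℝ => p₀ + v₀ * t - Real.sign v₀ * (amax / 2) * t ^ 2)
        (0 + v₀ * 1 - Real.sign v₀ * (amax / 2) * (2 * t ^ 1)) t :=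
      ((hasDerivAt_const t p₀).add ((hasDerivAt_id t).const_mul v₀)).sub
        ((hasDerivAt_pow 2 t).const_mul _)
    have h2 : HasDerivAt p (0 + v₀ * 1 - Real.sign v₀ * (amax / 2) * (2 * t ^ 1)) t := by
      rw [funext hpdef]; exact h1
    convert h2 using 1
    rw [hvdef]; ring
  · intro t
    have h1 : HasDerivAt (fun t : ℝ => v₀ - Real.sign v₀ * amax * t)
        (0 - Real.sign v₀ * amax * 1) t :=
      (hasDerivAt_const t v₀).sub ((hasDerivAt_id t).const_mul _)
    have h2 : HasDerivAt v (0 - Real.sign v₀ * amax * 1) t := by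
      rw [funext hvdef]; exact h1
    convert h2 using 1
    ring
  · rcases hs with ⟨h1, _⟩ | ⟨h1, _⟩ <;> rw [h1] <;>
      simp [abs_of_pos ha, abs_of_nonneg ha.le]
  · intro t ⟨ht0, htT⟩
    rw [le_div_iff₀ ha] at htT
    rw [hvdef, abs_le]
    rcases hs with ⟨h1, h2⟩ | ⟨h1, h2⟩ <;> rw [h1] <;> rw [h2] at htT <;>
      constructor <;> nlinarith
  · rw [hvdef]
    rcases hs with ⟨h1, h2⟩ | ⟨h1, h2⟩ <;> rw [h1, h2] <;> field_simp <;> ring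
  · rw [hpdef, hp₁def]
    rcases hs with ⟨h1, h2⟩ | ⟨h1, h2⟩ <;> rw [h1, h2] <;> field_simp <;> ring
  · intro t ⟨ht0, htT⟩
    rw [le_div_iff₀ ha] at htT
    rw [hpdef]
    rcases hs with ⟨h1, h2⟩ | ⟨h1, h2⟩ <;> rw [h1] <;> rw [h2] at htT hl1 hu1
    · constructor
      · nlinarith
      · have key : v₀ * t - amax / 2 * t ^ 2 ≤ v₀ * v₀ / (2 * amax) := by
          rw [le_div_iff₀ (by positivity : (0:ℝ) < 2 * amax)]
          nlinarith [sq_nonneg (v₀ - amax * t)]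
        linarith
    · constructor
      · have key : v₀ * -v₀ / (2 * amax) ≤ v₀ * t + amax / 2 * t ^ 2 := by
          rw [div_le_iff₀ (by positivity : (0:ℝ) < 2 * amax)]
          nlinarith [sq_nonneg (v₀ + amax * t)]
        linarith
      · nlinarith
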